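/- Let V be a 3-dimensional vector space over a finite field F with |F| = q. The square matrix over ℚ whose rows are indexed by the 1-dimensional subspaces L of V, whose columns are indexed by the 2-dimensional subspaces W of V, and whose (L, W)-entry is 1 if L ⊄ W and 0 if L ⊆ W, is invertible. Equivalently, the linear map T from the free ℚ-vector space on the 2-dimensional subspaces to the free ℚ-vector space on the 1-dimensional subspaces, defined by T(W) = Σ_{L ⊄ W} L, is bijective. -/

import Mathlib

open Module

section Aux

/-- In a finite-dimensional vector space over a finite field `F` with `q` elements,
the number of 1-dimensional subspaces times `q - 1` equals `q ^ dim - 1`. -/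
lemma aux_card_rank_one (F U : Type) [Field F] [Fintype F] [AddCommGroup U] [Module F U]
    [FiniteDimensional F U] :
    Nat.card {L : Submodule F U // finrank F L = 1} * (Fintype.card F - 1)
      = Fintype.card F ^ finrank F U - 1 := by
  classical
  have : Finite U := Module.finite_of_finite F
  letI : Fintype U := Fintype.ofFinite U
  letI : Fintype {L : Submodule F U // finrank F L = 1} := Fintype.ofFinite _
  set q := Fintype.card F with hq
  let φ : {v : U // v ≠ 0} → {L : Submodule F U // finrank F L = 1} :=
    fun v => ⟨Submodule.span F {v.1}, finrank_span_singleton v.2⟩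
  have hfiber : ∀ L : {L : Submodule F U // finrank F L = 1},
      Fintype.card {v // φ v = L} = q - 1 := by
    intro L
    have e : {v // φ v = L} ≃ {x : L.1 // x ≠ 0} := by
      refine ⟨fun v => ⟨⟨v.1.1, ?_⟩, ?_⟩, fun x => ⟨⟨x.1.1, fun h => x.2 (Subtype.ext h)⟩, ?_⟩,
        fun v => by ext; rfl, fun x => by ext; rfl⟩
      · have : Submodule.span F {v.1.1} = L.1 := congrArg Subtype.val v.2
        rw [← this]; exact Submodule.mem_span_singleton_self _
      · intro h
        exact v.1.2 (congrArg Subtype.val h)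
      · apply Subtype.ext
        show Submodule.span F {x.1.1} = L.1
        apply Submodule.eq_of_le_of_finrank_eq
        · rw [Submodule.span_le, Set.singleton_subset_iff]; exact x.1.2
        · rw [finrank_span_singleton (fun h => x.2 (Subtype.ext h))]; exact L.2.symm
    rw [Fintype.card_congr e]
    have hL : Fintype.card L.1 = q := by
      have := card_eq_pow_finrank (K := F) (V := L.1)
      rwa [L.2, pow_one] at this
    have h0 : Fintype.card {x : L.1 // ¬ x = 0}
        = Fintype.card L.1 - Fintype.card {x : L.1 // x = 0} :=
      Fintype.card_subtype_compl _
    simp only [ne_eq]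
    rw [h0, Fintype.card_subtype_eq (0 : L.1), hL]
  have hdom : Fintype.card {v : U // v ≠ 0} = q ^ finrank F U - 1 := by
    have h0 : Fintype.card {v : U // ¬ v = 0}
        = Fintype.card U - Fintype.card {v : U // v = 0} :=
      Fintype.card_subtype_compl _
    simp only [ne_eq]
    rw [h0, Fintype.card_subtype_eq (0 : U), card_eq_pow_finrank (K := F) (V := U)]
  rw [Nat.card_eq_fintype_card, ← hdom, Fintype.card_congr (Equiv.sigmaFiberEquiv φ).symm,
    Fintype.card_sigma]
  simp [hfiber, mul_comm]

/-- Rank-one submodules of `W` correspond to rank-one submodules of `V` contained in `W`. -/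
noncomputable def eqvPointsOf (F V : Type) [Field F] [AddCommGroup V] [Module F V]
    (W : Submodule F V) :
    {L' : Submodule F W // finrank F L' = 1} ≃ {L : Submodule F V // finrank F L = 1 ∧ L ≤ W} :=
  ((Submodule.MapSubtype.orderIso W).toEquiv.subtypeEquiv (fun a => by
      change finrank F a = 1 ↔ finrank F (a.map W.subtype) = 1
      rw [Submodule.finrank_map_subtype_eq])).trans
    ((Equiv.subtypeSubtypeEquivSubtypeInter _ _).trans
      (Equiv.subtypeEquivRight (fun L => and_comm)))

/-- Duality: 2-dimensional subspaces of a 3-dimensional space correspond to 1-dimensional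
subspaces of the dual space, via the dual annihilator. -/
noncomputable def eqvLinesDual (F V : Type) [Field F] [AddCommGroup V] [Module F V]
    [FiniteDimensional F V] (hV : finrank F V = 3) :
    {W : Submodule F V // finrank F W = 2} ≃
      {Φ : Submodule F (Module.Dual F V) // finrank F Φ = 1} where
  toFun W := ⟨W.1.dualAnnihilator, by
    have h := Submodule.finrank_quotient_add_finrank W.1
    have h2 : finrank F (V ⧸ W.1) = finrank F W.1.dualAnnihilator :=
      (Subspace.quotEquivAnnihilator W.1).finrank_eq
    have h3 := W.2
    omega⟩
  invFun Φ := ⟨Φ.1.dualCoannihilator, by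
    have h := Subspace.finrank_add_finrank_dualCoannihilator_eq Φ.1
    have h2 := Φ.2
    have h3 : finrank F (Module.Dual F V) = finrank F V := Subspace.dual_finrank_eq
    omega⟩
  left_inv W := Subtype.ext Subspace.dualAnnihilator_dualCoannihilator_eq
  right_inv Φ := Subtype.ext Subspace.dualCoannihilator_dualAnnihilator_eq

/-- A 2-dimensional subspace of a space over a field with `q` elements contains
exactly `q + 1` one-dimensional subspaces. -/
lemma aux_points_on_line (F V : Type) [Field F] [Fintype F] [AddCommGroup V] [Module F V]
    [FiniteDimensional F V] (W : Submodule F V) (hW : finrank F W = 2) :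
    Nat.card {L : Submodule F V // finrank F L = 1 ∧ L ≤ W} = Fintype.card F + 1 := by
  have hq2 : 2 ≤ Fintype.card F := Fintype.one_lt_card
  have h := aux_card_rank_one F W
  rw [hW, Nat.card_congr (eqvPointsOf F V W)] at h
  obtain ⟨k, hk⟩ : ∃ k, Fintype.card F = k + 2 := ⟨Fintype.card F - 2, by omega⟩
  rw [hk] at h ⊢
  have e2 : (k + 2) ^ 2 - 1 = (k + 3) * (k + 1) := by
    have : (k + 2) ^ 2 = (k + 3) * (k + 1) + 1 := by ring
    omega
  have e1 : k + 2 - 1 = k + 1 := rfl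
  rw [e2, e1] at h
  exact Nat.eq_of_mul_eq_mul_right (Nat.succ_pos k) h

end Aux

open Classical in
/-- Let `V` be 3-dimensional over a finite field with `q` elements. The linear map `T`
from the free ℚ-vector space on the 2-dimensional subspaces of `V` to the free ℚ-vector
space on the 1-dimensional subspaces, defined by `T W = ∑_{L ⊄ W} L`, is bijective
(equivalently, the 0-1 incidence matrix with `(L, W)`-entry `1` iff `L ⊄ W` is
invertible). -/
theorem nonincidence_map_bijective
    (F V : Type) [Field F] [Fintype F] [AddCommGroup V] [Module F V]
    (q : ℕ) (hq : Fintype.card F = q) (hV : Module.finrank F V = 3)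
    [FiniteDimensional F V]
    [Fintype {L : Submodule F V // Module.finrank F L = 1}]
    [Fintype {W : Submodule F V // Module.finrank F W = 2}] :
    Function.Bijective
      (fun (f : {W : Submodule F V // Module.finrank F W = 2} → ℚ)
           (L : {L : Submodule F V // Module.finrank F L = 1}) =>
        ∑ W : {W : Submodule F V // Module.finrank F W = 2},
          if (L : Submodule F V) ≤ (W : Submodule F V) then 0 else f W) := by
  classical
  subst hq
  have hq2 : 2 ≤ Fintype.card F := Fintype.one_lt_card
  -- the map as a linear map
  let Tlin : ({W : Submodule F V // finrank F W = 2} → ℚ) →ₗ[ℚ]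
      ({L : Submodule F V // finrank F L = 1} → ℚ) :=
    { toFun := fun f L => ∑ W : {W : Submodule F V // finrank F W = 2},
        if (L : Submodule F V) ≤ (W : Submodule F V) then 0 else f W
      map_add' := by
        intro f g
        funext L
        show _ = (∑ W : {W : Submodule F V // finrank F W = 2},
            if (L : Submodule F V) ≤ (W : Submodule F V) then (0:ℚ) else f W)
          + ∑ W : {W : Submodule F V // finrank F W = 2},
            if (L : Submodule F V) ≤ (W : Submodule F V) then (0:ℚ) else g W
        rw [← Finset.sum_add_distrib]
        exact Finset.sum_congr rfl (fun W _ => by split_ifs <;> simp)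
      map_smul' := by
        intro c f
        funext L
        show _ = c * ∑ W : {W : Submodule F V // finrank F W = 2},
            if (L : Submodule F V) ≤ (W : Submodule F V) then (0:ℚ) else f W
        rw [Finset.mul_sum]
        exact Finset.sum_congr rfl (fun W _ => by split_ifs <;> simp) }
  suffices h : Function.Bijective Tlin by exact h
  -- cardinalities agree, by duality
  have hcard : Fintype.card {W : Submodule F V // finrank F W = 2}
      = Fintype.card {L : Submodule F V // finrank F L = 1} := by
    have hP := aux_card_rank_one F V
    have hD := aux_card_rank_one F (Module.Dual F V)
    have hdim : finrank F (Module.Dual F V) = finrank F V := Subspace.dual_finrank_eq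
    rw [hdim, hV] at hD
    rw [hV] at hP
    have hB : Nat.card {W : Submodule F V // finrank F W = 2}
        = Nat.card {Φ : Submodule F (Module.Dual F V) // finrank F Φ = 1} :=
      Nat.card_congr (eqvLinesDual F V hV)
    rw [← Nat.card_eq_fintype_card, ← Nat.card_eq_fintype_card, hB]
    exact Nat.eq_of_mul_eq_mul_right (show 0 < Fintype.card F - 1 by omega) (by rw [hD, hP])
  -- counting: a line contains q + 1 points
  have hQ : ∀ W : {W : Submodule F V // finrank F W = 2},
      (Finset.univ.filter fun L : {L : Submodule F V // finrank F L = 1} =>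
        (L : Submodule F V) ≤ (W : Submodule F V)).card = Fintype.card F + 1 := by
    intro W
    have e : {L : {L : Submodule F V // finrank F L = 1} //
          (L : Submodule F V) ≤ (W : Submodule F V)}
        ≃ {L : Submodule F V // finrank F L = 1 ∧ L ≤ (W : Submodule F V)} :=
      Equiv.subtypeSubtypeEquivSubtypeInter
        (fun L : Submodule F V => finrank F L = 1) (fun L => L ≤ (W : Submodule F V))
    calc (Finset.univ.filter fun L : {L : Submodule F V // finrank F L = 1} =>
            (L : Submodule F V) ≤ (W : Submodule F V)).card
        = Fintype.card {L : {L : Submodule F V // finrank F L = 1} //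
            (L : Submodule F V) ≤ (W : Submodule F V)} := (Fintype.card_subtype _).symm
      _ = Nat.card {L : Submodule F V // finrank F L = 1 ∧ L ≤ (W : Submodule F V)} := by
          rw [← Nat.card_eq_fintype_card, Nat.card_congr e]
      _ = Fintype.card F + 1 := aux_points_on_line F V W.1 W.2
  -- two distinct lines meet in exactly one point
  have hmeet : ∀ W W₀ : {W : Submodule F V // finrank F W = 2}, W ≠ W₀ →
      (Finset.univ.filter fun L : {L : Submodule F V // finrank F L = 1} =>
        (L : Submodule F V) ≤ (W₀ : Submodule F V) ∧
        (L : Submodule F V) ≤ (W : Submodule F V)).card = 1 := by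
    intro W W₀ hne
    have hsup : finrank F (W₀.1 ⊔ W.1 : Submodule F V) = 3 := by
      have hle : finrank F (W₀.1 ⊔ W.1 : Submodule F V) ≤ 3 := hV ▸ Submodule.finrank_le _
      have hlt : W₀.1 < W₀.1 ⊔ W.1 := by
        rcases lt_or_eq_of_le (le_sup_left : W₀.1 ≤ W₀.1 ⊔ W.1) with h | h
        · exact h
        · exfalso
          apply hne
          apply Subtype.ext
          have hWle : W.1 ≤ W₀.1 := by rw [h]; exact le_sup_right
          exact Submodule.eq_of_le_of_finrank_eq hWle (W.2.trans W₀.2.symm)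
      have := Submodule.finrank_lt_finrank_of_lt hlt
      have h2 := W₀.2
      omega
    have hinf : finrank F (W₀.1 ⊓ W.1 : Submodule F V) = 1 := by
      have h := Submodule.finrank_sup_add_finrank_inf_eq W₀.1 W.1
      rw [W₀.2, W.2, hsup] at h
      omega
    rw [Finset.card_eq_one]
    refine ⟨⟨W₀.1 ⊓ W.1, hinf⟩, ?_⟩
    ext L
    simp only [Finset.mem_filter, Finset.mem_univ, true_and, Finset.mem_singleton]
    constructor
    · rintro ⟨hle1, hle2⟩
      apply Subtype.ext
      exact Submodule.eq_of_le_of_finrank_eq (le_inf hle1 hle2) (L.2.trans hinf.symm)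
    · rintro rfl
      exact ⟨inf_le_left, inf_le_right⟩
  -- injectivity
  have hinj : Function.Injective Tlin := by
    rw [injective_iff_map_eq_zero Tlin]
    intro f hf
    set S := ∑ W : {W : Submodule F V // finrank F W = 2}, f W with hS
    have h0 : ∀ L : {L : Submodule F V // finrank F L = 1},
        ∑ W : {W : Submodule F V // finrank F W = 2},
          (if (L : Submodule F V) ≤ (W : Submodule F V) then (0 : ℚ) else f W) = 0 :=
      fun L => congrFun hf L
    have h1 : ∀ L : {L : Submodule F V // finrank F L = 1},
        ∑ W : {W : Submodule F V // finrank F W = 2},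
          (if (L : Submodule F V) ≤ (W : Submodule F V) then f W else 0) = S := by
      intro L
      have hsplit : ∑ W : {W : Submodule F V // finrank F W = 2},
          ((if (L : Submodule F V) ≤ (W : Submodule F V) then f W else 0)
          + (if (L : Submodule F V) ≤ (W : Submodule F V) then 0 else f W)) = S := by
        rw [hS]
        exact Finset.sum_congr rfl (fun W _ => by split_ifs <;> simp)
      rw [Finset.sum_add_distrib, h0 L, add_zero] at hsplit
      exact hsplit
    have h2 : ∀ W₀ : {W : Submodule F V // finrank F W = 2}, f W₀ = S := by
      intro W₀
      set Q := Finset.univ.filter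
        (fun L : {L : Submodule F V // finrank F L = 1} =>
          (L : Submodule F V) ≤ (W₀ : Submodule F V)) with hQdef
      have lhs : ∑ L ∈ Q, ∑ W : {W : Submodule F V // finrank F W = 2},
          (if (L : Submodule F V) ≤ (W : Submodule F V) then f W else 0)
          = ((Fintype.card F : ℚ) + 1) * S := by
        rw [Finset.sum_congr rfl (fun L _ => h1 L), Finset.sum_const, hQdef, hQ W₀,
          nsmul_eq_mul]
        push_cast
        ring
      rw [Finset.sum_comm] at lhs
      have inner : ∀ W : {W : Submodule F V // finrank F W = 2},
          ∑ L ∈ Q, (if (L : Submodule F V) ≤ (W : Submodule F V) then f W else 0)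
          = ((Q.filter fun L : {L : Submodule F V // finrank F L = 1} =>
              (L : Submodule F V) ≤ (W : Submodule F V)).card : ℚ) * f W := by
        intro W
        rw [← Finset.sum_filter, Finset.sum_const, nsmul_eq_mul]
      rw [Finset.sum_congr rfl (fun W _ => inner W)] at lhs
      have cards : ∀ W : {W : Submodule F V // finrank F W = 2},
          ((Q.filter fun L : {L : Submodule F V // finrank F L = 1} =>
              (L : Submodule F V) ≤ (W : Submodule F V)).card : ℚ)
          = 1 + (if W = W₀ then (Fintype.card F : ℚ) else 0) := by
        intro W
        by_cases h : W = W₀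
        · subst h
          have hfe : Q.filter (fun L : {L : Submodule F V // finrank F L = 1} =>
              (L : Submodule F V) ≤ (W : Submodule F V)) = Q := by
            apply Finset.filter_eq_self.mpr
            intro L' hL'
            rw [hQdef] at hL'
            exact (Finset.mem_filter.mp hL').2
          rw [hfe, hQdef, hQ W, if_pos rfl]
          push_cast
          ring
        · rw [hQdef, Finset.filter_filter, hmeet W W₀ h, if_neg h]
          norm_num
      rw [Finset.sum_congr rfl (fun W _ => by rw [cards W])] at lhs
      have expand : ∑ W : {W : Submodule F V // finrank F W = 2},
          (1 + (if W = W₀ then (Fintype.card F : ℚ) else 0)) * f W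
          = S + (Fintype.card F : ℚ) * f W₀ := by
        have hterm : ∀ W : {W : Submodule F V // finrank F W = 2},
            (1 + (if W = W₀ then (Fintype.card F : ℚ) else 0)) * f W
            = f W + (if W = W₀ then (Fintype.card F : ℚ) * f W else 0) := by
          intro W
          split_ifs <;> ring
        rw [Finset.sum_congr rfl (fun W _ => hterm W), Finset.sum_add_distrib,
          Finset.sum_ite_eq' Finset.univ W₀ (fun W => (Fintype.card F : ℚ) * f W),
          if_pos (Finset.mem_univ _), hS]
      rw [expand] at lhs
      have hq0 : (Fintype.card F : ℚ) ≠ 0 := Nat.cast_ne_zero.mpr (by omega)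
      have : (Fintype.card F : ℚ) * f W₀ = (Fintype.card F : ℚ) * S := by linarith
      exact mul_left_cancel₀ hq0 this
    have hBcard : 2 ≤ Fintype.card {W : Submodule F V // finrank F W = 2} := by
      by_contra hB1
      push_neg at hB1
      have hP := aux_card_rank_one F V
      rw [hV] at hP
      rw [← Nat.card_eq_fintype_card, ← Nat.card_eq_fintype_card] at hcard
      rw [← Nat.card_eq_fintype_card] at hB1
      have hB : Nat.card {W : Submodule F V // finrank F W = 2} ≤ 1 := by omega
      have hle : Nat.card {W : Submodule F V // finrank F W = 2} * (Fintype.card F - 1)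
          ≤ 1 * (Fintype.card F - 1) := Nat.mul_le_mul_right _ hB
      rw [← hcard] at hP
      rw [hP, one_mul] at hle
      have : Fintype.card F < Fintype.card F ^ 3 := by
        calc Fintype.card F = Fintype.card F ^ 1 := (pow_one _).symm
          _ < Fintype.card F ^ 3 := Nat.pow_lt_pow_right (by omega) (by omega)
      omega
    have hS0 : S = 0 := by
      have hself : S = (Fintype.card {W : Submodule F V // finrank F W = 2} : ℚ) * S := by
        calc S = ∑ W : {W : Submodule F V // finrank F W = 2}, f W := hS
          _ = ∑ _W : {W : Submodule F V // finrank F W = 2}, S :=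
              Finset.sum_congr rfl (fun W _ => h2 W)
          _ = (Fintype.card {W : Submodule F V // finrank F W = 2} : ℚ) * S := by
              rw [Finset.sum_const, Finset.card_univ, nsmul_eq_mul]
      by_contra hne
      have h1' : (1 : ℚ) = (Fintype.card {W : Submodule F V // finrank F W = 2} : ℚ) :=
        mul_right_cancel₀ hne (by rw [one_mul]; exact hself)
      have h2' : (2 : ℚ) ≤ (Fintype.card {W : Submodule F V // finrank F W = 2} : ℚ) := by
        exact_mod_cast hBcard
      linarith
    funext W₀
    rw [Pi.zero_apply, h2 W₀, hS0]
  exact ⟨hinj,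
    (LinearMap.injective_iff_surjective_of_finrank_eq_finrank
      (by rw [Module.finrank_pi, Module.finrank_pi, hcard])).mp hinj⟩
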